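/- Let G be a simple d-regular graph (d ≥ 1) on a finite vertex set V of size n ≥ 1, let ε > 0 and C ≥ 16 be real numbers, and suppose that for every subset S ⊆ V the number e(S, V∖S) of edges of G with exactly one endpoint in S satisfies e(S, V∖S) ≥ C·ε·d·|S|·(n−|S|)/n. Then for any three independent sets I₁, I₂, I₃ of G, each of size at least (1/2 − ε)·n, there exist indices k ≠ l in {1,2,3} such that |I_k ∩ I_l| ≥ (1/2 − 2/C − ε)·n. -/

import Mathlib

open Finset

/-- Number of edges of `G` with exactly one endpoint in `S` (counted via the
orientation whose first coordinate lies in `S`). -/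
def crossCount {V : Type*} [Fintype V] [DecidableEq V] (G : SimpleGraph V)
    [DecidableRel G.Adj] (S : Finset V) : ℕ :=
  (Finset.univ.filter (fun p : V × V => G.Adj p.1 p.2 ∧ p.1 ∈ S ∧ p.2 ∉ S)).card

lemma count_fst {V : Type*} [Fintype V] [DecidableEq V] (G : SimpleGraph V)
    [DecidableRel G.Adj] {d : ℕ} (hreg : G.IsRegularOfDegree d) (W : Finset V) :
    (univ.filter (fun p : V × V => G.Adj p.1 p.2 ∧ p.1 ∈ W)).card = d * W.card := by
  classical
  rw [Finset.card_eq_sum_card_fiberwise (f := Prod.fst) (t := W)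
    (fun p hp => (mem_filter.mp hp).2.2)]
  have hfib : ∀ u ∈ W,
      ((univ.filter (fun p : V × V => G.Adj p.1 p.2 ∧ p.1 ∈ W)).filter
        (fun p => p.1 = u)).card = d := by
    intro u hu
    have he : ((univ.filter (fun p : V × V => G.Adj p.1 p.2 ∧ p.1 ∈ W)).filter
        (fun p => p.1 = u))
        = (G.neighborFinset u).map ⟨fun v => (u, v), fun a b h => by
            simpa using h⟩ := by
      ext ⟨a, b⟩
      simp only [mem_filter, mem_univ, true_and, Finset.mem_map,
        SimpleGraph.mem_neighborFinset, Function.Embedding.coeFn_mk, Prod.mk.injEq]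
      constructor
      · rintro ⟨⟨hadj, _⟩, rfl⟩
        exact ⟨b, hadj, rfl⟩
      · rintro ⟨v, hv, h⟩
        obtain ⟨rfl, rfl⟩ := Prod.mk.inj (h : (u, v) = (a, b))
        exact ⟨⟨hv, hu⟩, rfl⟩
    rw [he, Finset.card_map]
    exact hreg u
  rw [Finset.sum_congr rfl hfib, Finset.sum_const, smul_eq_mul, mul_comm]

lemma count_snd {V : Type*} [Fintype V] [DecidableEq V] (G : SimpleGraph V)
    [DecidableRel G.Adj] {d : ℕ} (hreg : G.IsRegularOfDegree d) (W : Finset V) :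
    (univ.filter (fun p : V × V => G.Adj p.1 p.2 ∧ p.2 ∈ W)).card = d * W.card := by
  classical
  have he : (univ.filter (fun p : V × V => G.Adj p.1 p.2 ∧ p.2 ∈ W))
      = (univ.filter (fun p : V × V => G.Adj p.1 p.2 ∧ p.1 ∈ W)).map
          (Equiv.prodComm V V).toEmbedding := by
    ext ⟨a, b⟩
    simp [Finset.mem_map_equiv, G.adj_comm]
  rw [he, Finset.card_map, count_fst G hreg W]

/-- All `d·|A∩B|` edges from `A∩B` and all edges leaving the symmetric
difference land in the complement of `A∪B`. -/
lemma pair_count {V : Type*} [Fintype V] [DecidableEq V] (G : SimpleGraph V)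
    [DecidableRel G.Adj] {d : ℕ} (hreg : G.IsRegularOfDegree d)
    (A B : Finset V) (hA : ∀ u ∈ A, ∀ v ∈ A, ¬ G.Adj u v)
    (hB : ∀ u ∈ B, ∀ v ∈ B, ¬ G.Adj u v) :
    crossCount G ((A ∪ B) \ (A ∩ B)) + d * (A ∩ B).card
      ≤ d * (univ \ (A ∪ B)).card := by
  classical
  set Δ : Finset V := (A ∪ B) \ (A ∩ B) with hΔ
  set T : Finset V := univ \ (A ∪ B) with hT
  set E1 := univ.filter (fun p : V × V => G.Adj p.1 p.2 ∧ p.1 ∈ Δ ∧ p.2 ∉ Δ) with hE1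
  set E2 := univ.filter (fun p : V × V => G.Adj p.1 p.2 ∧ p.1 ∈ (A ∩ B)) with hE2
  set ET := univ.filter (fun p : V × V => G.Adj p.1 p.2 ∧ p.2 ∈ T) with hET
  have hsub1 : E1 ⊆ ET := by
    intro ⟨u, v⟩ hp
    simp only [hE1, hET, mem_filter, mem_univ, true_and] at hp ⊢
    obtain ⟨hadj, hu, hv⟩ := hp
    refine ⟨hadj, ?_⟩
    have hu1 := (mem_sdiff.mp hu).1
    rw [hT, mem_sdiff]
    refine ⟨mem_univ v, fun hvAB => ?_⟩
    by_cases hvP : v ∈ A ∩ B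
    · rcases mem_union.mp hu1 with h | h
      · exact hA u h v (mem_inter.mp hvP).1 hadj
      · exact hB u h v (mem_inter.mp hvP).2 hadj
    · exact hv (mem_sdiff.mpr ⟨hvAB, hvP⟩)
  have hsub2 : E2 ⊆ ET := by
    intro ⟨u, v⟩ hp
    simp only [hE2, hET, mem_filter, mem_univ, true_and, mem_inter] at hp ⊢
    obtain ⟨hadj, huA, huB⟩ := hp
    refine ⟨hadj, ?_⟩
    simp only [hT, mem_sdiff, mem_univ, true_and, mem_union]
    rintro (hvA | hvB)
    · exact hA u huA v hvA hadj
    · exact hB u huB v hvB hadj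
  have hdisj : Disjoint E1 E2 := by
    rw [Finset.disjoint_left]
    rintro ⟨u, v⟩ hp1 hp2
    simp only [hE1, hE2, mem_filter, mem_univ, true_and] at hp1 hp2
    have := hp1.2.1
    simp only [hΔ, mem_sdiff] at this
    exact this.2 hp2.2
  have hcards : E1.card + E2.card ≤ ET.card := by
    rw [← Finset.card_union_of_disjoint hdisj]
    exact Finset.card_le_card (Finset.union_subset hsub1 hsub2)
  have h2 : E2.card = d * (A ∩ B).card := count_fst G hreg _
  have hTc : ET.card = d * T.card := count_snd G hreg _
  have h1 : crossCount G Δ = E1.card := rfl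
  omega

lemma arith_dichotomy (n δ C ε dd cc : ℝ) (hn0 : 0 < n) (hC : 16 ≤ C) (hε : 0 < ε)
    (hd0 : 0 < dd) (hδ0 : 0 ≤ δ) (hδn : δ ≤ n)
    (hexp : C * ε * dd * δ * (n - δ) / n ≤ cc) (hcc : cc ≤ dd * (2 * ε * n)) :
    δ ≤ 4 * n / C ∨ n - δ ≤ 4 * n / C := by
  have hC0 : (0:ℝ) < C := by linarith
  rw [div_le_iff₀ hn0] at hexp
  have hchain : C * ε * dd * δ * (n - δ) ≤ ε * dd * (2 * n ^ 2) := by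
    calc C * ε * dd * δ * (n - δ) ≤ cc * n := hexp
    _ ≤ dd * (2 * ε * n) * n := by nlinarith [hcc, hn0]
    _ = ε * dd * (2 * n ^ 2) := by ring
  have hkey : C * (δ * (n - δ)) ≤ 2 * n ^ 2 := by
    by_contra hcon
    push_neg at hcon
    nlinarith [mul_pos hε hd0, hchain, hcon]
  rcases le_total δ (n / 2) with h | h
  · left
    rw [le_div_iff₀ hC0]
    nlinarith [hkey, hn0, hδ0, h]
  · right
    rw [le_div_iff₀ hC0]
    nlinarith [hkey, hn0, hδn, h]

theorem three_indep_sets_two_intersect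
    {V : Type*} [Fintype V] [DecidableEq V]
    (G : SimpleGraph V) [DecidableRel G.Adj]
    (d n : ℕ) (hd : 1 ≤ d) (hreg : G.IsRegularOfDegree d)
    (hn : n = Fintype.card V) (hn1 : 1 ≤ n)
    (ε C : ℝ) (hε : 0 < ε) (hC : 16 ≤ C)
    (hexp : ∀ S : Finset V,
      C * ε * d * (S.card : ℝ) * ((n : ℝ) - S.card) / n ≤ (crossCount G S : ℝ))
    (I : Fin 3 → Finset V)
    (hindep : ∀ k, ∀ u ∈ I k, ∀ v ∈ I k, ¬ G.Adj u v)
    (hsize : ∀ k, ((1 : ℝ)/2 - ε) * n ≤ ((I k).card : ℝ)) :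
    ∃ k l : Fin 3, k ≠ l ∧
      ((1 : ℝ)/2 - 2/C - ε) * n ≤ ((I k ∩ I l).card : ℝ) := by
  classical
  have hC0 : (0:ℝ) < C := lt_of_lt_of_le (by norm_num) hC
  have hn0 : (0:ℝ) < n := by exact_mod_cast hn1
  have hd0 : (0:ℝ) < d := by exact_mod_cast hd
  -- basic cardinality relation for each pair
  have hsum : ∀ k l : Fin 3,
      ((I k).card:ℝ) + ((I l).card:ℝ)
        = (((I k ∪ I l) \ (I k ∩ I l)).card:ℝ) + 2*((I k ∩ I l).card:ℝ) := by
    intro k l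
    have h1 : (I k ∪ I l).card + (I k ∩ I l).card = (I k).card + (I l).card :=
      Finset.card_union_add_card_inter _ _
    have h2 : ((I k ∪ I l) \ (I k ∩ I l)).card + (I k ∩ I l).card = (I k ∪ I l).card :=
      Finset.card_sdiff_add_card_eq_card
        ((Finset.inter_subset_left).trans Finset.subset_union_left)
    have h3 : (I k).card + (I l).card
        = ((I k ∪ I l) \ (I k ∩ I l)).card + 2*(I k ∩ I l).card := by omega
    exact_mod_cast congrArg (Nat.cast : ℕ → ℝ) h3
  -- the key dichotomy for each pair
  have pairfact : ∀ k l : Fin 3,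
      ((((I k ∪ I l) \ (I k ∩ I l)).card:ℝ) ≤ 4*n/C ∨
       (n:ℝ) - (((I k ∪ I l) \ (I k ∩ I l)).card:ℝ) ≤ 4*n/C) := by
    intro k l
    have hpc := pair_count G hreg (I k) (I l) (hindep k) (hindep l)
    have hU : (I k ∪ I l).card ≤ n := hn ▸ Finset.card_le_univ _
    have hTc : (univ \ (I k ∪ I l)).card = n - (I k ∪ I l).card := by
      rw [Finset.card_sdiff_of_subset (Finset.subset_univ _), Finset.card_univ, hn]
    rw [hTc] at hpc
    have hcast : (crossCount G ((I k ∪ I l) \ (I k ∩ I l)) : ℝ)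
        + (d:ℝ) * ((I k ∩ I l).card:ℝ)
        ≤ (d:ℝ) * ((n:ℝ) - ((I k ∪ I l).card:ℝ)) := by
      have h := (Nat.cast_le (α := ℝ)).mpr hpc
      push_cast [Nat.cast_sub hU] at h
      nlinarith [h]
    have h2 : ((I k ∪ I l).card:ℝ) + ((I k ∩ I l).card:ℝ)
        = ((I k).card:ℝ) + ((I l).card:ℝ) := by
      exact_mod_cast congrArg (Nat.cast : ℕ → ℝ)
        (Finset.card_union_add_card_inter (I k) (I l))
    have hlin : (n:ℝ) - ((I k ∪ I l).card:ℝ) - ((I k ∩ I l).card:ℝ) ≤ 2*ε*n := by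
      linarith [hsize k, hsize l, h2]
    have hmul := mul_le_mul_of_nonneg_left hlin (le_of_lt hd0)
    have hcc : (crossCount G ((I k ∪ I l) \ (I k ∩ I l)) : ℝ)
        ≤ (d:ℝ) * (2 * ε * n) := by nlinarith [hcast, hmul]
    have hδ0 : (0:ℝ) ≤ ((((I k ∪ I l) \ (I k ∩ I l)).card:ℕ):ℝ) := Nat.cast_nonneg _
    have hδn : ((((I k ∪ I l) \ (I k ∩ I l)).card:ℕ):ℝ) ≤ (n:ℝ) := by
      have h := hn ▸ Finset.card_le_univ ((I k ∪ I l) \ (I k ∩ I l))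
      exact_mod_cast h
    exact arith_dichotomy n _ C ε d _ hn0 hC hε hd0 hδ0 hδn (hexp _) hcc
  -- winning from a small symmetric difference
  have finish_small : ∀ k l : Fin 3,
      ((((I k ∪ I l) \ (I k ∩ I l)).card:ℝ) ≤ 4*n/C) →
      ((1 : ℝ)/2 - 2/C - ε) * n ≤ ((I k ∩ I l).card : ℝ) := by
    intro k l hδ
    have h1 := hsum k l
    have h2 := hsize k
    have h3 := hsize l
    rw [sub_mul, sub_mul, div_mul_eq_mul_div, sub_le_iff_le_add, ← sub_le_iff_le_add']
    have h4 : (2:ℝ) / C * (n:ℝ) = (4 * (n:ℝ) / C) / 2 := by ring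
    linarith
  rcases pairfact 0 1 with h01 | h01
  · exact ⟨0, 1, by decide, finish_small 0 1 h01⟩
  rcases pairfact 0 2 with h02 | h02
  · exact ⟨0, 2, by decide, finish_small 0 2 h02⟩
  rcases pairfact 1 2 with h12 | h12
  · exact ⟨1, 2, by decide, finish_small 1 2 h12⟩
  -- all three symmetric differences are huge: contradiction
  exfalso
  have h16 : 4*(n:ℝ)/C ≤ (n:ℝ)/4 := by
    rw [div_le_div_iff₀ hC0 (by norm_num : (0:ℝ) < 4)]
    nlinarith [hn0, hC]
  have hIE : (I 0).card + (I 1).card + (I 2).card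
      ≤ n + (I 0 ∩ I 1).card + (I 0 ∩ I 2).card + (I 1 ∩ I 2).card := by
    have ha : (I 0 ∪ I 1).card + (I 0 ∩ I 1).card = (I 0).card + (I 1).card :=
      Finset.card_union_add_card_inter _ _
    have hb : ((I 0 ∪ I 1) ∪ I 2).card + ((I 0 ∪ I 1) ∩ I 2).card
        = (I 0 ∪ I 1).card + (I 2).card := Finset.card_union_add_card_inter _ _
    have hc : ((I 0 ∪ I 1) ∩ I 2).card ≤ (I 0 ∩ I 2).card + (I 1 ∩ I 2).card := by
      rw [Finset.union_inter_distrib_right]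
      exact Finset.card_union_le _ _
    have hun : ((I 0 ∪ I 1) ∪ I 2).card ≤ n := hn ▸ Finset.card_le_univ _
    omega
  have hIE' : ((I 0).card : ℝ) + ((I 1).card:ℝ) + ((I 2).card:ℝ)
      ≤ (n:ℝ) + ((I 0 ∩ I 1).card:ℝ) + ((I 0 ∩ I 2).card:ℝ) + ((I 1 ∩ I 2).card:ℝ) := by
    exact_mod_cast hIE
  linarith [h01, h02, h12, hsum 0 1, hsum 0 2, hsum 1 2, hIE', h16, hn0,
    hsize 0, hsize 1, hsize 2]
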